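/- The integral over the triangle {(x,y) : 0<x<π, 0<y<π, x+y<π} of (2/π)·sin(x)·sin(y)·sin(x+y)/(sin(x)²+sin(y)²)² equals 1. -/

import Mathlib

set_option maxHeartbeats 1000000

open MeasureTheory Real Set

noncomputable def Gf (x : ℝ) : ℝ :=
  1/4 + cos x ^ 2 / (4 * (1 + sin x ^ 2)) +
    cos x / (2 * Real.sqrt (1 + sin x ^ 2) ^ 3) * (π/2 + arcsin (cos x / Real.sqrt 2))

noncomputable def Hf (y : ℝ) : ℝ :=
  y/2 + sin y / Real.sqrt (1 + sin y ^ 2) * (π/4 + arcsin (cos y / Real.sqrt 2) / 2)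

lemma sqrtA_pos (y : ℝ) : 0 < Real.sqrt (1 + sin y ^ 2) := by
  apply Real.sqrt_pos.2; nlinarith [sq_nonneg (sin y)]

lemma sqrtA_sq (y : ℝ) : Real.sqrt (1 + sin y ^ 2) ^ 2 = 1 + sin y ^ 2 :=
  Real.sq_sqrt (by nlinarith [sq_nonneg (sin y)])

lemma sqrt_one_sub (y : ℝ) :
    Real.sqrt (1 - (cos y / Real.sqrt 2) ^ 2) = Real.sqrt (1 + sin y ^ 2) / Real.sqrt 2 := by
  have h : 1 - (cos y / Real.sqrt 2) ^ 2 = (1 + sin y ^ 2) / 2 := by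
    have := sin_sq_add_cos_sq y
    have h2 : Real.sqrt 2 ^ 2 = 2 := Real.sq_sqrt (by norm_num)
    field_simp
    nlinarith [this, h2]
  rw [h, Real.sqrt_div (by nlinarith [sq_nonneg (sin y)])]

lemma arcsin_arg_ne (y : ℝ) : cos y / Real.sqrt 2 ≠ -1 ∧ cos y / Real.sqrt 2 ≠ 1 := by
  have h2 : (1:ℝ) < Real.sqrt 2 := by
    nlinarith [Real.sq_sqrt (show (0:ℝ) ≤ 2 by norm_num), Real.sqrt_nonneg 2]
  have hc := abs_cos_le_one y
  constructor <;> intro h <;>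
  · have : |cos y / Real.sqrt 2| = 1 := by rw [h]; simp
    rw [abs_div, abs_of_pos (by linarith : (0:ℝ) < Real.sqrt 2)] at this
    have : |cos y| = Real.sqrt 2 := by field_simp at this; linarith [this]
    linarith [this ▸ hc]

lemma hasDerivAt_Hf (y : ℝ) : HasDerivAt Hf (Gf y) y := by
  have hA : (0:ℝ) < 1 + sin y ^ 2 := by nlinarith [sq_nonneg (sin y)]
  have hsa := sqrtA_pos y
  have hsq := sqrtA_sq y
  have h2 : Real.sqrt 2 ^ 2 = 2 := Real.sq_sqrt (by norm_num)
  have h2p : (0:ℝ) < Real.sqrt 2 := Real.sqrt_pos.2 (by norm_num)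
  have hpy := sin_sq_add_cos_sq y
  -- derivative of 1 + sin^2
  have d1 : HasDerivAt (fun t => 1 + sin t ^ 2) (2 * sin y * cos y) y := by
    have := ((Real.hasDerivAt_sin y).pow 2).const_add 1
    simpa [mul_comm, mul_assoc, mul_left_comm] using this
  have d2 : HasDerivAt (fun t => Real.sqrt (1 + sin t ^ 2))
      (2 * sin y * cos y / (2 * Real.sqrt (1 + sin y ^ 2))) y := d1.sqrt (ne_of_gt hA)
  have d3 : HasDerivAt (fun t => sin t / Real.sqrt (1 + sin t ^ 2))
      ((cos y * Real.sqrt (1 + sin y ^ 2) -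
        sin y * (2 * sin y * cos y / (2 * Real.sqrt (1 + sin y ^ 2)))) /
        Real.sqrt (1 + sin y ^ 2) ^ 2) y :=
    (Real.hasDerivAt_sin y).div d2 (ne_of_gt hsa)
  have d4 : HasDerivAt (fun t => cos t / Real.sqrt 2) (-sin y / Real.sqrt 2) y :=
    (Real.hasDerivAt_cos y).div_const _
  have d5 : HasDerivAt (fun t => arcsin (cos t / Real.sqrt 2))
      (1 / Real.sqrt (1 - (cos y / Real.sqrt 2) ^ 2) * (-sin y / Real.sqrt 2)) y :=
    by have := (Real.hasDerivAt_arcsin (arcsin_arg_ne y).1 (arcsin_arg_ne y).2).comp y d4; exact this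
  have d6 : HasDerivAt (fun t => π/4 + arcsin (cos t / Real.sqrt 2) / 2)
      (1 / Real.sqrt (1 - (cos y / Real.sqrt 2) ^ 2) * (-sin y / Real.sqrt 2) / 2) y :=
    (d5.div_const 2).const_add _
  have d7 := (d3.mul d6).const_add ((fun t => t/2) y)
  have d8 : HasDerivAt Hf
      ((1:ℝ)/2 + ((cos y * Real.sqrt (1 + sin y ^ 2) -
        sin y * (2 * sin y * cos y / (2 * Real.sqrt (1 + sin y ^ 2)))) /
        Real.sqrt (1 + sin y ^ 2) ^ 2 * (π/4 + arcsin (cos y / Real.sqrt 2) / 2) +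
        sin y / Real.sqrt (1 + sin y ^ 2) *
        (1 / Real.sqrt (1 - (cos y / Real.sqrt 2) ^ 2) * (-sin y / Real.sqrt 2) / 2))) y := by
    have := ((hasDerivAt_id y).div_const 2).add (d3.mul d6)
    exact this
  convert d8 using 1
  rw [sqrt_one_sub y]
  unfold Gf
  set s := sin y
  set c := cos y
  set sa := Real.sqrt (1 + s ^ 2)
  set as := arcsin (c / Real.sqrt 2)
  field_simp
  ring_nf
  linear_combination (-4*s^2*c*π + 256*s^2*c*π*sa^5*Real.sqrt 2 - 8*s^2*c*as + 512*s^2*c*as*sa^5*Real.sqrt 2 - 4*s^2*sa + 256*s^2*sa^6*Real.sqrt 2 - 256*s^4*sa^4*Real.sqrt 2 - 4*c*π + 256*c*π*sa^5*Real.sqrt 2 - 8*c*as + 512*c*as*sa^5*Real.sqrt 2 + 4*c^2*sa - 256*c^2*sa^6*Real.sqrt 2 - 4*sa + 256*sa^6*Real.sqrt 2 - 256*s^4*sa^2*Real.sqrt 2 + 256*s^2*sa^2*Real.sqrt 2 - 256*s^6*sa^2*Real.sqrt 2 - 256*s^2*c^2*sa^4*Real.sqrt 2 - 256*c^2*sa^4*Real.sqrt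 2 + 256*sa^4*Real.sqrt 2 - 512*s^6*Real.sqrt 2 + 512*s^2*Real.sqrt 2 - 256*s^8*Real.sqrt 2 - 256*s^4*c^2*sa^2*Real.sqrt 2 - 512*s^2*c^2*sa^2*Real.sqrt 2 - 256*c^2*sa^2*Real.sqrt 2 + 256*sa^2*Real.sqrt 2 - 256*s^6*c^2*Real.sqrt 2 - 768*s^4*c^2*Real.sqrt 2 - 768*s^2*c^2*Real.sqrt 2 - 256*c^2*Real.sqrt 2 + 256*Real.sqrt 2) * hsq + (4*s^2*sa + 4*sa - 256*s^8*Real.sqrt 2 - 1024*s^6*Real.sqrt 2 - 1536*s^4*Real.sqrt 2 - 1024*s^2*Real.sqrt 2 - 256*Real.sqrt 2) * hpy + (256*Real.sqrt 2*(-(c*(π+2*as)*(1+s^2)*sa^5) - 2*s^2*sa^6)) * hsq + (256*Real.sqrt 2*sa^8) * hpy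

lemma Gf_cont : Continuous Gf := by
  unfold Gf
  have h1 : Continuous fun x : ℝ => 1 + sin x ^ 2 := by continuity
  have hA : ∀ x : ℝ, (0:ℝ) < 1 + sin x ^ 2 := fun x => by nlinarith [sq_nonneg (sin x)]
  apply Continuous.add
  · apply Continuous.add continuous_const
    exact (continuous_cos.pow 2).div (continuous_const.mul h1) fun x => by positivity
  · apply Continuous.mul
    · exact continuous_cos.div (continuous_const.mul ((Real.continuous_sqrt.comp h1).pow 3))
        fun x => by have := sqrtA_pos x; positivity
    · exact continuous_const.add (Real.continuous_arcsin.comp (continuous_cos.div_const _))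

lemma outer_integral : ∫ x in (0:ℝ)..π, Gf x = π/2 := by
  rw [intervalIntegral.integral_eq_sub_of_hasDerivAt (fun y _ => hasDerivAt_Hf y)
    (Gf_cont.intervalIntegrable 0 π)]
  simp [Hf]

noncomputable def Ff (x y : ℝ) : ℝ :=
  sin y ^ 2 / (2 * (sin y ^ 2 + sin x ^ 2)) -
    cos x * sin x * (sin y * cos y) / (2 * (1 + sin x ^ 2) * (sin y ^ 2 + sin x ^ 2)) -
    cos x / (2 * Real.sqrt (1 + sin x ^ 2) ^ 3) *
      arcsin (sin x * cos y / Real.sqrt (sin y ^ 2 + sin x ^ 2))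

lemma Ff_deriv (x : ℝ) (hx : x ∈ Ioo 0 π) (y : ℝ) (hy : y ∈ Ioo 0 (π - x)) :
    HasDerivAt (fun t => Ff x t)
      (sin x * sin y * sin (x + y) / (sin x ^ 2 + sin y ^ 2) ^ 2) y := by
  have hk : 0 < sin x := Real.sin_pos_of_pos_of_lt_pi hx.1 hx.2
  have hsy : 0 < sin y := Real.sin_pos_of_pos_of_lt_pi hy.1 (by linarith [hy.2, hx.1])
  have hD : (0:ℝ) < sin y ^ 2 + sin x ^ 2 := by positivity
  have hA : (0:ℝ) < 1 + sin x ^ 2 := by positivity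
  have hsd : 0 < Real.sqrt (sin y ^ 2 + sin x ^ 2) := Real.sqrt_pos.2 hD
  have hsdsq : Real.sqrt (sin y ^ 2 + sin x ^ 2) ^ 2 = sin y ^ 2 + sin x ^ 2 :=
    Real.sq_sqrt hD.le
  have hsa := sqrtA_pos x
  have hsasq := sqrtA_sq x
  have hpx := sin_sq_add_cos_sq x
  have hpy := sin_sq_add_cos_sq y
  set k := sin x
  set c := cos x
  -- the arcsin argument
  have hq2 : 1 - (k * cos y / Real.sqrt (sin y ^ 2 + k ^ 2)) ^ 2 =
      sin y ^ 2 * (1 + k ^ 2) / (sin y ^ 2 + k ^ 2) := by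
    rw [div_pow, mul_pow, hsdsq]
    field_simp
    linear_combination (-(k^2)) * hpy
  have hqlt : (k * cos y / Real.sqrt (sin y ^ 2 + k ^ 2)) ^ 2 < 1 := by
    have : (0:ℝ) < sin y ^ 2 * (1 + k ^ 2) / (sin y ^ 2 + k ^ 2) := by positivity
    nlinarith [hq2]
  have hq1 : k * cos y / Real.sqrt (sin y ^ 2 + k ^ 2) ≠ -1 := by
    intro h; rw [h] at hqlt; norm_num at hqlt
  have hq1' : k * cos y / Real.sqrt (sin y ^ 2 + k ^ 2) ≠ 1 := by
    intro h; rw [h] at hqlt; norm_num at hqlt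
  have hsqrt1q : Real.sqrt (1 - (k * cos y / Real.sqrt (sin y ^ 2 + k ^ 2)) ^ 2) =
      sin y * Real.sqrt (1 + k ^ 2) / Real.sqrt (sin y ^ 2 + k ^ 2) := by
    rw [hq2, show sin y ^ 2 * (1 + k ^ 2) / (sin y ^ 2 + k ^ 2) =
      (sin y * Real.sqrt (1 + k ^ 2) / Real.sqrt (sin y ^ 2 + k ^ 2)) ^ 2 by
        rw [div_pow, mul_pow, hsasq, hsdsq]]
    exact Real.sqrt_sq (by positivity)
  -- derivatives
  have dD : HasDerivAt (fun t => sin t ^ 2 + k ^ 2) (2 * sin y * cos y) y := by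
    have := ((Real.hasDerivAt_sin y).pow 2).add_const (k ^ 2)
    simpa [mul_comm, mul_assoc, mul_left_comm] using this
  have d1 : HasDerivAt (fun t => sin t ^ 2 / (2 * (sin t ^ 2 + k ^ 2)))
      ((2 * sin y * cos y * (2 * (sin y ^ 2 + k ^ 2)) - sin y ^ 2 * (2 * (2 * sin y * cos y))) /
        (2 * (sin y ^ 2 + k ^ 2)) ^ 2) y := by
    have h2 : HasDerivAt (fun t => sin t ^ 2) (2 * sin y * cos y) y := by
      have := (Real.hasDerivAt_sin y).pow 2
      exact this.congr_deriv (by norm_num <;> ring)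
    exact h2.div (dD.const_mul 2) (by positivity)
  have d2 : HasDerivAt (fun t => c * k * (sin t * cos t) / (2 * (1 + k ^ 2) * (sin t ^ 2 + k ^ 2)))
      ((c * k * (cos y * cos y + sin y * -sin y) * (2 * (1 + k ^ 2) * (sin y ^ 2 + k ^ 2)) -
        c * k * (sin y * cos y) * (2 * (1 + k ^ 2) * (2 * sin y * cos y))) /
        (2 * (1 + k ^ 2) * (sin y ^ 2 + k ^ 2)) ^ 2) y := by
    have hnum : HasDerivAt (fun t => c * k * (sin t * cos t))
        (c * k * (cos y * cos y + sin y * -sin y)) y :=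
      ((Real.hasDerivAt_sin y).mul (Real.hasDerivAt_cos y)).const_mul (c * k)
    exact hnum.div (dD.const_mul _) (by positivity)
  have dsd : HasDerivAt (fun t => Real.sqrt (sin t ^ 2 + k ^ 2))
      (2 * sin y * cos y / (2 * Real.sqrt (sin y ^ 2 + k ^ 2))) y := dD.sqrt hD.ne'
  have dq : HasDerivAt (fun t => k * cos t / Real.sqrt (sin t ^ 2 + k ^ 2))
      ((k * -sin y * Real.sqrt (sin y ^ 2 + k ^ 2) -
        k * cos y * (2 * sin y * cos y / (2 * Real.sqrt (sin y ^ 2 + k ^ 2)))) /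
        Real.sqrt (sin y ^ 2 + k ^ 2) ^ 2) y :=
    ((Real.hasDerivAt_cos y).const_mul k).div dsd hsd.ne'
  have darc : HasDerivAt (fun t => arcsin (k * cos t / Real.sqrt (sin t ^ 2 + k ^ 2)))
      (1 / Real.sqrt (1 - (k * cos y / Real.sqrt (sin y ^ 2 + k ^ 2)) ^ 2) *
        ((k * -sin y * Real.sqrt (sin y ^ 2 + k ^ 2) -
        k * cos y * (2 * sin y * cos y / (2 * Real.sqrt (sin y ^ 2 + k ^ 2)))) /
        Real.sqrt (sin y ^ 2 + k ^ 2) ^ 2)) y :=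
    by have := (Real.hasDerivAt_arcsin hq1 hq1').comp y dq; exact this
  have darc2 : HasDerivAt (fun t => arcsin (k * cos t / Real.sqrt (sin t ^ 2 + k ^ 2)))
      (-(k * Real.sqrt (1 + k ^ 2)) / (sin y ^ 2 + k ^ 2)) y := by
    convert darc using 1
    rw [hsqrt1q]
    field_simp
    linear_combination (2*k*sin y^3*Real.sqrt (sin y ^ 2 + k ^ 2) + 2*k^3*sin y*Real.sqrt (sin y ^ 2 + k ^ 2) - 1*Real.sqrt (sin y ^ 2 + k ^ 2)^2) * hsasq + (1*sin y^2 - 2*k*sin y^3*Real.sqrt (sin y ^ 2 + k ^ 2) - 2*k^3*sin y*Real.sqrt (sin y ^ 2 + k ^ 2) - 1) * hsdsq + (-2*k*sin y^3*Real.sqrt (sin y ^ 2 + k ^ 2) - 2*k^3*sin y*Real.sqrt (sin y ^ 2 + k ^ 2) + 1*k^2 + 1*sin y^2) * hpy + (-2*k*sin y*Real.sqrt (sin y^2+k^2)*(sin y^2+k^2)) * hsasq +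
      (2*k*sin y*Real.sqrt (sin y^2+k^2)*(sin y^2+k^2)) * hsdsq +
      (2*k*sin y*Real.sqrt (sin y^2+k^2)*(sin y^2+k^2)) * hpy
  have d1' : HasDerivAt (fun t => sin t ^ 2 / (2 * (sin t ^ 2 + k ^ 2)))
      (sin y * cos y * k ^ 2 / (sin y ^ 2 + k ^ 2) ^ 2) y := by
    convert d1 using 1; field_simp; ring
  have d2' : HasDerivAt (fun t => c * k * (sin t * cos t) / (2 * (1 + k ^ 2) * (sin t ^ 2 + k ^ 2)))
      (c * k * ((cos y ^ 2 - sin y ^ 2) * (sin y ^ 2 + k ^ 2) - 2 * sin y ^ 2 * cos y ^ 2) /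
        (2 * (1 + k ^ 2) * (sin y ^ 2 + k ^ 2) ^ 2)) y := by
    convert d2 using 1; field_simp; ring
  have dtot := (d1'.sub d2').sub (darc2.const_mul (c / (2 * Real.sqrt (1 + k ^ 2) ^ 3)))
  have dF : HasDerivAt (fun t => Ff x t)
      (sin y * cos y * k ^ 2 / (sin y ^ 2 + k ^ 2) ^ 2 -
        c * k * ((cos y ^ 2 - sin y ^ 2) * (sin y ^ 2 + k ^ 2) - 2 * sin y ^ 2 * cos y ^ 2) /
          (2 * (1 + k ^ 2) * (sin y ^ 2 + k ^ 2) ^ 2) -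
        c / (2 * Real.sqrt (1 + k ^ 2) ^ 3) * (-(k * Real.sqrt (1 + k ^ 2)) / (sin y ^ 2 + k ^ 2))) y := by
    exact dtot
  convert dF using 1
  rw [sin_add, show Real.sqrt (1 + k ^ 2) ^ 3 = (1 + k ^ 2) * Real.sqrt (1 + k ^ 2) by
    rw [pow_succ, hsasq]]
  set sy := sin y
  set cy := cos y
  set sa := Real.sqrt (1 + k ^ 2)
  have hdne : sy ^ 2 + k ^ 2 ≠ 0 := ne_of_gt hD
  set d := sy ^ 2 + k ^ 2 with hd
  field_simp
  rw [show (k^2 + sy^2) = d by rw [hd]; ring]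
  linear_combination (1*sin x^4*cos x*sy^2 - 8*sin x^11*cos x*sy^2*sa - 8*sin x^13*cos x*sy^2*sa - 1*sin x^2*cos x*sy^4 - 10*sin x^9*cos x*sy^4*sa - 10*sin x^11*cos x*sy^4*sa - 1*cos x*sy^6 + 10*sin x^5*cos x*sy^8*sa + 10*sin x^7*cos x*sy^8*sa + 8*sin x^3*cos x*sy^10*sa + 8*sin x^5*cos x*sy^10*sa + 2*sin x*cos x*sy^12*sa + 2*sin x^3*cos x*sy^12*sa + 1*sin x^6*cos x - 2*sin x^13*cos x*sa - 2*sin x^15*cos x*sa) * hpy + (-4*(1+k^2)*sa*k*d^5*c*sy^2) * hd +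
    (2*(1+k^2)*sa*k*d^5*c*(d-2*sy^2)) * hpy

lemma Ff_cont (x : ℝ) (hx : x ∈ Ioo 0 π) : Continuous (fun y => Ff x y) := by
  have hk : 0 < sin x := Real.sin_pos_of_pos_of_lt_pi hx.1 hx.2
  have hD : ∀ y : ℝ, (0:ℝ) < sin y ^ 2 + sin x ^ 2 := fun y => by positivity
  unfold Ff
  apply Continuous.sub
  apply Continuous.sub
  · exact (continuous_sin.pow 2).div
      (continuous_const.mul ((continuous_sin.pow 2).add continuous_const))
      fun y => by have := hD y; positivity
  · apply (continuous_const.mul (continuous_sin.mul continuous_cos)).div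
      (continuous_const.mul ((continuous_sin.pow 2).add continuous_const))
    intro y
    have := hD y
    simp only [Pi.mul_apply, Pi.add_apply, Pi.pow_apply]; exact mul_ne_zero (by positivity) this.ne'
  · apply Continuous.mul continuous_const
    apply Real.continuous_arcsin.comp
    exact (continuous_const.mul continuous_cos).div
      (Real.continuous_sqrt.comp ((continuous_sin.pow 2).add continuous_const))
      fun y => by have := hD y; exact (Real.sqrt_pos.2 this).ne'

lemma inner_integral (x : ℝ) (hx : x ∈ Ioo 0 π) :
    ∫ y in (0:ℝ)..(π - x), sin x * sin y * sin (x + y) / (sin x ^ 2 + sin y ^ 2) ^ 2 = Gf x := by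
  have hk : 0 < sin x := Real.sin_pos_of_pos_of_lt_pi hx.1 hx.2
  have hab : (0:ℝ) ≤ π - x := by linarith [hx.2]
  have hA : (0:ℝ) < 1 + sin x ^ 2 := by positivity
  have hsa := sqrtA_pos x
  have hsasq := sqrtA_sq x
  have hint : IntervalIntegrable
      (fun y => sin x * sin y * sin (x + y) / (sin x ^ 2 + sin y ^ 2) ^ 2) volume 0 (π - x) := by
    apply Continuous.intervalIntegrable
    exact ((continuous_const.mul continuous_sin).mul
      (continuous_sin.comp (continuous_const.add continuous_id))).div
      (((continuous_const.add (continuous_sin.pow 2))).pow 2)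
      fun y => by have : (0:ℝ) < sin x ^ 2 + sin y ^ 2 := by positivity
                  positivity
  rw [intervalIntegral.integral_eq_sub_of_hasDeriv_right_of_le hab
    ((Ff_cont x hx).continuousOn)
    (fun y hy => (Ff_deriv x hx y hy).hasDerivWithinAt) hint]
  have h2 : (0:ℝ) < Real.sqrt 2 := Real.sqrt_pos.2 (by norm_num)
  have h2sq : Real.sqrt 2 ^ 2 = 2 := Real.sq_sqrt (by norm_num)
  have hs1 : sin (π - x) = sin x := Real.sin_pi_sub x
  have hc1 : cos (π - x) = -cos x := Real.cos_pi_sub x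
  have h2k : Real.sqrt (sin x ^ 2 + sin x ^ 2) = Real.sqrt 2 * sin x := by
    rw [show sin x ^ 2 + sin x ^ 2 = 2 * sin x ^ 2 by ring,
      Real.sqrt_mul (by norm_num : (0:ℝ) ≤ 2), Real.sqrt_sq hk.le]
  have h0k : Real.sqrt (sin 0 ^ 2 + sin x ^ 2) = sin x := by
    simp [Real.sqrt_sq hk.le]
  unfold Ff
  rw [hs1, hc1, h2k, h0k]
  have harg1 : sin x * -cos x / (Real.sqrt 2 * sin x) = -(cos x / Real.sqrt 2) := by
    field_simp
  have harg2 : sin x * cos 0 / sin x = 1 := by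
    rw [Real.cos_zero, mul_one, div_self hk.ne']
  rw [harg1, harg2, Real.arcsin_neg, Real.arcsin_one, Real.sin_zero, Real.cos_zero]
  unfold Gf
  field_simp
  ring

/-- The bivariate angle density for triangles with `a² + b² = 1` and uniform
included angle `γ` integrates to 1. -/
theorem angle_density_sum_two_squares_integrates_to_one :
    ∫ p in {p : ℝ × ℝ | 0 < p.1 ∧ p.1 < π ∧ 0 < p.2 ∧ p.2 < π ∧ p.1 + p.2 < π},
      (2 / π) * sin p.1 * sin p.2 * sin (p.1 + p.2) /
        (sin p.1 ^ 2 + sin p.2 ^ 2) ^ 2 = 1 := by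
  have hπ : (0:ℝ) < π := Real.pi_pos
  set S : Set (ℝ × ℝ) := {p : ℝ × ℝ | 0 < p.1 ∧ p.1 < π ∧ 0 < p.2 ∧ p.2 < π ∧ p.1 + p.2 < π}
    with hSdef
  set f : ℝ × ℝ → ℝ := fun p =>
    (2 / π) * sin p.1 * sin p.2 * sin (p.1 + p.2) / (sin p.1 ^ 2 + sin p.2 ^ 2) ^ 2 with hfdef
  have hS : MeasurableSet S := by
    apply MeasurableSet.inter (measurableSet_lt measurable_const measurable_fst)
    apply MeasurableSet.inter (measurableSet_lt measurable_fst measurable_const)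
    apply MeasurableSet.inter (measurableSet_lt measurable_const measurable_snd)
    exact (measurableSet_lt measurable_snd measurable_const).inter
      (measurableSet_lt (measurable_fst.add measurable_snd) measurable_const)
  have hmem : ∀ p : ℝ × ℝ, p ∈ S ↔ p.1 ∈ Ioo 0 π ∧ p.2 ∈ Ioo 0 (π - p.1) := by
    rintro ⟨x, y⟩
    simp only [hSdef, Set.mem_setOf_eq, Set.mem_Ioo]
    constructor
    · rintro ⟨h1, h2, h3, h4, h5⟩; exact ⟨⟨h1, h2⟩, h3, by linarith⟩
    · rintro ⟨⟨h1, h2⟩, h3, h4⟩; exact ⟨h1, h2, h3, by linarith, by linarith⟩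
  have hfm : Measurable f := by
    apply Measurable.div
    · exact ((measurable_const.mul (Real.measurable_sin.comp measurable_fst)).mul
        (Real.measurable_sin.comp measurable_snd)).mul
        (Real.measurable_sin.comp (measurable_fst.add measurable_snd))
    · exact (((Real.measurable_sin.comp measurable_fst).pow_const 2).add
        ((Real.measurable_sin.comp measurable_snd).pow_const 2)).pow_const 2
  have hfnn : ∀ p ∈ S, 0 ≤ f p := by
    rintro ⟨x, y⟩ hp
    obtain ⟨⟨hx1, hx2⟩, hy1, hy2⟩ := (hmem (x, y)).1 hp
    have h1 : 0 ≤ sin x := Real.sin_nonneg_of_nonneg_of_le_pi hx1.le hx2.le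
    have h2 : 0 ≤ sin y := Real.sin_nonneg_of_nonneg_of_le_pi hy1.le (by linarith)
    have h3 : 0 ≤ sin (x + y) := Real.sin_nonneg_of_nonneg_of_le_pi (by linarith)
      (by linarith)
    have h4 : (0:ℝ) < 2 / π := by positivity
    apply div_nonneg (by positivity) (by positivity)
  -- inner integral value
  have hGnn : ∀ x ∈ Ioo (0:ℝ) π, 0 ≤ Gf x := by
    intro x hx
    rw [← inner_integral x hx]
    apply intervalIntegral.integral_nonneg (by linarith [hx.2])
    intro y hy
    have h1 : 0 ≤ sin x := Real.sin_nonneg_of_nonneg_of_le_pi hx.1.le hx.2.le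
    have h2 : 0 ≤ sin y := Real.sin_nonneg_of_nonneg_of_le_pi hy.1 (by
      rcases hy with ⟨_, h⟩; linarith [hx.1])
    have h3 : 0 ≤ sin (x + y) := Real.sin_nonneg_of_nonneg_of_le_pi
      (by rcases hy with ⟨h, _⟩; linarith [hx.1]) (by rcases hy with ⟨_, h⟩; linarith)
    apply div_nonneg (by positivity) (by positivity)
  have hinner : ∀ x ∈ Ioo (0:ℝ) π,
      ∫ y in Ioo 0 (π - x), f (x, y) = (2 / π) * Gf x := by
    intro x hx
    rw [← MeasureTheory.integral_Ioc_eq_integral_Ioo,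
      ← intervalIntegral.integral_of_le (by linarith [hx.2])]
    rw [← inner_integral x hx, ← intervalIntegral.integral_const_mul]
    apply intervalIntegral.integral_congr
    intro y _
    simp only [hfdef]
    ring
  have hfy_int : ∀ x ∈ Ioo (0:ℝ) π, IntegrableOn (fun y => f (x, y)) (Ioo 0 (π - x)) := by
    intro x hx
    have hk : 0 < sin x := Real.sin_pos_of_pos_of_lt_pi hx.1 hx.2
    have hc : Continuous (fun y => f (x, y)) := by
      simp only [hfdef]
      apply Continuous.div (by fun_prop) (by fun_prop)
      intro y
      have : (0:ℝ) < sin x ^ 2 + sin y ^ 2 := by positivity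
      positivity
    exact (hc.integrableOn_Icc).mono_set Ioo_subset_Icc_self
  have hfy_nn : ∀ x ∈ Ioo (0:ℝ) π, ∀ y ∈ Ioo (0:ℝ) (π - x), 0 ≤ f (x, y) :=
    fun x hx y hy => hfnn (x, y) ((hmem _).2 ⟨hx, hy⟩)
  have hmeas : Measurable (S.indicator fun p => ENNReal.ofReal (f p)) :=
    (ENNReal.measurable_ofReal.comp hfm).indicator hS
  have key : ∫ p in S, f p = (∫⁻ p in S, ENNReal.ofReal (f p)).toReal := by
    rw [MeasureTheory.integral_eq_lintegral_of_nonneg_ae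
      ((ae_restrict_iff' hS).2 (ae_of_all _ hfnn)) hfm.aestronglyMeasurable.restrict]
  have hsec : ∀ x : ℝ, ∫⁻ y, S.indicator (fun p => ENNReal.ofReal (f p)) (x, y) =
      (Ioo (0:ℝ) π).indicator (fun x => ENNReal.ofReal ((2 / π) * Gf x)) x := by
    intro x
    by_cases hx : x ∈ Ioo (0:ℝ) π
    · rw [Set.indicator_of_mem hx]
      have hptw : ∀ y : ℝ, S.indicator (fun p => ENNReal.ofReal (f p)) (x, y)
          = (Ioo 0 (π - x)).indicator (fun y => ENNReal.ofReal (f (x, y))) y := by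
        intro y
        by_cases hy : y ∈ Ioo (0:ℝ) (π - x)
        · rw [Set.indicator_of_mem hy, Set.indicator_of_mem ((hmem _).2 ⟨hx, hy⟩)]
        · rw [Set.indicator_of_notMem hy,
            Set.indicator_of_notMem (fun hmemS => hy ((hmem _).1 hmemS).2)]
      simp_rw [hptw]
      rw [MeasureTheory.lintegral_indicator measurableSet_Ioo]
      rw [← MeasureTheory.ofReal_integral_eq_lintegral_ofReal (hfy_int x hx)
        ((ae_restrict_iff' measurableSet_Ioo).2 (ae_of_all _ (hfy_nn x hx)))]
      rw [hinner x hx]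
    · rw [Set.indicator_of_notMem hx]
      have hptw : ∀ y : ℝ, S.indicator (fun p => ENNReal.ofReal (f p)) (x, y) = 0 := by
        intro y
        exact Set.indicator_of_notMem (fun hmemS => hx ((hmem _).1 hmemS).1) _
      simp_rw [hptw]
      simp
  have hGint : IntegrableOn (fun x => (2 / π) * Gf x) (Ioo 0 π) :=
    ((continuous_const.mul Gf_cont).integrableOn_Icc).mono_set Ioo_subset_Icc_self
  have hGnn' : 0 ≤ᵐ[volume.restrict (Ioo (0:ℝ) π)] fun x => (2 / π) * Gf x := by
    apply (ae_restrict_iff' measurableSet_Ioo).2 (ae_of_all _ _)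
    intro x hx
    have := hGnn x hx
    positivity
  have houter : ∫ x in Ioo (0:ℝ) π, (2 / π) * Gf x = 1 := by
    rw [← MeasureTheory.integral_Ioc_eq_integral_Ioo,
      ← intervalIntegral.integral_of_le hπ.le,
      intervalIntegral.integral_const_mul, outer_integral]
    field_simp
  have hlin : ∫⁻ p in S, ENNReal.ofReal (f p) = ENNReal.ofReal 1 := by
    rw [← MeasureTheory.lintegral_indicator hS]
    rw [MeasureTheory.Measure.volume_eq_prod, MeasureTheory.lintegral_prod _ hmeas.aemeasurable]
    simp_rw [hsec]
    rw [MeasureTheory.lintegral_indicator measurableSet_Ioo]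
    rw [← MeasureTheory.ofReal_integral_eq_lintegral_ofReal hGint hGnn']
    rw [houter]
  rw [key, hlin, ENNReal.toReal_ofReal (by norm_num)]
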